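/- Let I be a finite nonempty index set and let q, t : I → ℝ be probability mass functions (q i ≥ 0, t i ≥ 0 for all i, and Σ_{i∈I} q i = Σ_{i∈I} t i = 1). Define Sp(β) = Σ_{i∈I} max(0, β·q i − t i) for β ∈ ℝ. Then there exists a unique real number β with Sp(β) = 1, and this β satisfies 1 ≤ β ≤ 2. -/
import Mathlib


open Real Finset

lemma beta_aux {I : Type*} [Fintype I]
    (q t : I → ℝ) (hq : ∀ i, 0 ≤ q i) (ht : ∀ i, 0 ≤ t i)
    {a b : ℝ} (hab : a < b)
    (ha : ∑ i, max 0 (a * q i - t i) = 1) :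
    ∑ i, max 0 (a * q i - t i) < ∑ i, max 0 (b * q i - t i) := by
  -- some term is positive
  have hex : ∃ i : I, 0 < max 0 (a * q i - t i) := by
    by_contra h
    push_neg at h
    have : (∑ i, max 0 (a * q i - t i)) ≤ 0 :=
      Finset.sum_nonpos fun i _ => h i
    linarith
  obtain ⟨i, hi⟩ := hex
  have hterm : 0 < a * q i - t i := by
    rcases lt_or_ge 0 (a * q i - t i) with h | h
    · exact h
    · simp [max_eq_left h] at hi
  have hqi : 0 < q i := by
    rcases (hq i).lt_or_eq with h | h
    · exact h
    · exfalso; have := ht i; rw [← h] at hterm; nlinarith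
  apply Finset.sum_lt_sum ?_ ⟨i, Finset.mem_univ i, ?_⟩
  · intro j _
    exact max_le_max le_rfl (by nlinarith [hq j])
  · have h2 : a * q i - t i < b * q i - t i := by nlinarith
    calc max 0 (a * q i - t i) = a * q i - t i := max_eq_right hterm.le
    _ < b * q i - t i := h2
    _ ≤ max 0 (b * q i - t i) := le_max_right _ _

/-- Existence, uniqueness and the bounds `1 ≤ β ≤ 2` for the constant `β` of
Theorem 1: for probability mass functions `q`, `t`, there is a unique real `β`
with `Σ max(0, β·q i − t i) = 1`, and that `β` lies in `[1, 2]`. -/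
theorem beta_exists_unique {I : Type*} [Fintype I] [Nonempty I]
    (q t : I → ℝ) (hq : ∀ i, 0 ≤ q i) (ht : ∀ i, 0 ≤ t i)
    (hqs : ∑ i, q i = 1) (hts : ∑ i, t i = 1)
    (Sp : ℝ → ℝ) (hSp : ∀ β : ℝ, Sp β = ∑ i, max 0 (β * q i - t i)) :
    (∃! β : ℝ, Sp β = 1) ∧ ∀ β : ℝ, Sp β = 1 → 1 ≤ β ∧ β ≤ 2 := by
  set f : ℝ → ℝ := fun β => ∑ i, max 0 (β * q i - t i) with hf
  have hSpf : ∀ β, Sp β = f β := hSp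
  have hcont : Continuous f := by
    apply continuous_finset_sum
    intro i _
    exact continuous_const.max (by continuity)
  have h1 : f 1 ≤ 1 := by
    have : f 1 ≤ ∑ i, q i := by
      apply Finset.sum_le_sum
      intro i _
      exact max_le (hq i) (by have := ht i; have := hq i; nlinarith)
    rwa [hqs] at this
  have h2 : 1 ≤ f 2 := by
    have : (∑ i, (2 * q i - t i)) ≤ f 2 :=
      Finset.sum_le_sum fun i _ => le_max_right _ _
    rw [Finset.sum_sub_distrib, ← Finset.mul_sum, hqs, hts] at this
    linarith
  -- IVT
  have hsurj : (1:ℝ) ∈ Set.Icc (f 1) (f 2) := ⟨h1, h2⟩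
  obtain ⟨β₀, hβ₀mem, hβ₀⟩ :=
    intermediate_value_Icc (by norm_num : (1:ℝ) ≤ 2) hcont.continuousOn hsurj
  have huniq : ∀ β, f β = 1 → β = β₀ := by
    intro β hβ
    rcases lt_trichotomy β β₀ with h | h | h
    · have h' := beta_aux q t hq ht h hβ
      have e1 : f β = 1 := hβ
      have e2 : f β₀ = 1 := hβ₀
      change f β < f β₀ at h'
      linarith
    · exact h
    · have h' := beta_aux q t hq ht h hβ₀
      change f β₀ < f β at h'
      have e1 : f β = 1 := hβ
      linarith
  constructor
  · refine ⟨β₀, ?_, fun β hβ => huniq β (by rw [← hSpf]; exact hβ)⟩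
    show Sp β₀ = 1
    rw [hSpf]; exact hβ₀
  · intro β hβ
    have := huniq β (by rw [← hSpf]; exact hβ)
    subst this
    exact ⟨hβ₀mem.1, hβ₀mem.2⟩
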